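/- Let V be a finite set and f : 2^V → ℝ a nonnegative submodular function. Let S be a random subset of V (a finitely supported probability distribution over subsets of V) such that for every element e ∈ V, the probability that e ∈ S is at most p, where p ∈ [0,1]. Then E[f(S)] ≥ (1 − p)·f(∅). -/
import Mathlib

/-- If `f` is a nonnegative submodular function on subsets of a finite
set `V`, and `μ` is a (finitely supported) probability distribution over subsets of `V`
such that every element belongs to the random subset with probability at most `p ∈ [0,1]`,
then `E[f(S)] ≥ (1 - p) * f(∅)`. -/
theorem stmt_0 {V : Type*} [Fintype V] [DecidableEq V]
    (f : Finset V → ℝ)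
    (hf_nonneg : ∀ S : Finset V, 0 ≤ f S)
    (hf_submod : ∀ X Y : Finset V, X ⊆ Y → ∀ e ∉ Y,
      f (insert e Y) - f Y ≤ f (insert e X) - f X)
    (μ : Finset V → ℝ)
    (hμ_nonneg : ∀ S : Finset V, 0 ≤ μ S)
    (hμ_sum : ∑ S : Finset V, μ S = 1)
    (p : ℝ) (hp0 : 0 ≤ p) (hp1 : p ≤ 1)
    (hmarg : ∀ e : V, ∑ S ∈ Finset.univ.filter (fun S : Finset V => e ∈ S), μ S ≤ p) :
    (1 - p) * f ∅ ≤ ∑ S : Finset V, μ S * f S := by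
  classical
  set x : V → ℝ := fun e => ∑ S ∈ Finset.univ.filter (fun S : Finset V => e ∈ S), μ S
    with hxdef
  have hx0 : ∀ e, 0 ≤ x e := fun e => Finset.sum_nonneg (fun S _ => hμ_nonneg S)
  have hxp : ∀ e, x e ≤ p := hmarg
  rcases isEmpty_or_nonempty V with hV | hV
  · have hall : ∀ S : Finset V, S = ∅ := fun S =>
      Finset.eq_empty_of_forall_notMem (fun a _ => (IsEmpty.false a).elim)
    have hsum : ∑ S : Finset V, μ S * f S = f ∅ := by
      calc ∑ S : Finset V, μ S * f S = ∑ S : Finset V, μ S * f ∅ := by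
            exact Finset.sum_congr rfl (fun S _ => by rw [hall S])
        _ = (∑ S : Finset V, μ S) * f ∅ := by rw [Finset.sum_mul]
        _ = f ∅ := by rw [hμ_sum, one_mul]
    rw [hsum]
    nlinarith [hf_nonneg (∅ : Finset V)]
  · set n := Fintype.card V with hn
    have hn0 : 0 < n := Fintype.card_pos
    set em : Fin n ≃ V := (Fintype.equivFin V).symm with hem
    set y : Fin n → ℝ := fun i => -x (em i) with hy
    set σ : Equiv.Perm (Fin n) := Tuple.sort y with hσ
    have hmono : Monotone (y ∘ σ) := Tuple.monotone_sort y
    set e : ℕ → V := fun k => if h : k < n then em (σ ⟨k, h⟩) else Classical.arbitrary V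
      with he
    have he_eq : ∀ (k : ℕ) (h : k < n), e k = em (σ ⟨k, h⟩) := fun k h => dif_pos h
    have he_inj : ∀ k j, k < n → j < n → e k = e j → k = j := by
      intro k j hk hj hkj
      rw [he_eq k hk, he_eq j hj] at hkj
      have := σ.injective (em.injective hkj)
      simpa using this
    set P : ℕ → Finset V := fun k => (Finset.range (min k n)).image e with hP
    have hP0 : P 0 = ∅ := by simp [hP]
    have hPsucc : ∀ k, k < n → P (k + 1) = insert (e k) (P k) := by
      intro k hk
      have h1 : min (k + 1) n = k + 1 := min_eq_left hk
      have h2 : min k n = k := min_eq_left (le_of_lt hk)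
      simp only [hP, h1, h2, Finset.range_add_one, Finset.image_insert]
    have hPstab : ∀ k, n ≤ k → P (k + 1) = P k := by
      intro k hk
      have h1 : min (k + 1) n = n := min_eq_right (le_trans hk (Nat.le_succ k))
      have h2 : min k n = n := min_eq_right hk
      simp only [hP, h1, h2]
    have hePk : ∀ k, k < n → e k ∉ P k := by
      intro k hk hmem
      simp only [hP, Finset.mem_image, Finset.mem_range] at hmem
      obtain ⟨j, hj, hje⟩ := hmem
      have hjk : j < k := lt_of_lt_of_le hj (min_le_left _ _)
      have hjn : j < n := lt_of_lt_of_le hj (min_le_right _ _)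
      exact absurd (he_inj j k hjn hk hje) (Nat.ne_of_lt hjk)
    have hPn : P n = Finset.univ := by
      apply Finset.eq_univ_of_forall
      intro v
      simp only [hP, Finset.mem_image, Finset.mem_range, min_self]
      refine ⟨(σ.symm (em.symm v) : Fin n), (σ.symm (em.symm v)).isLt, ?_⟩
      rw [he_eq _ (σ.symm (em.symm v)).isLt]
      simp
    set F : ℕ → ℝ := fun k => f (P k) with hF
    have hF0 : F 0 = f ∅ := by rw [hF]; simp only [hP0]
    have hFnn : ∀ k, 0 ≤ F k := fun k => hf_nonneg _
    set u : ℕ → ℝ := fun k => if h : k < n then x (e k) else 0 with hu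
    have hu_nonneg : ∀ k, 0 ≤ u k := by
      intro k; rw [hu]; by_cases h : k < n <;> simp [h, hx0]
    have hu_anti : ∀ k j : ℕ, k ≤ j → u j ≤ u k := by
      intro k j hkj
      by_cases hj : j < n
      · have hk : k < n := lt_of_le_of_lt hkj hj
        have hle : (⟨k, hk⟩ : Fin n) ≤ ⟨j, hj⟩ := hkj
        have := hmono hle
        simp only [Function.comp_apply, hy] at this
        rw [hu]
        simp only [hj, hk, dif_pos]
        rw [he_eq k hk, he_eq j hj]
        linarith
      · rw [hu]; simp only [hj, dif_neg, not_false_iff]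
        by_cases hk : k < n <;> simp [hk, hx0]
    have hu0p : u 0 ≤ p := by
      rw [hu]; simp only [hn0, dif_pos]; exact hxp _
    -- Abel summation bound
    have habel : ∀ m : ℕ, u m * F m - u 0 * F 0 ≤
        ∑ k ∈ Finset.range m, u k * (F (k + 1) - F k) := by
      intro m
      induction m with
      | zero => simp
      | succ m ih =>
        rw [Finset.sum_range_succ]
        have h1 : u (m + 1) * F (m + 1) ≤ u m * F (m + 1) :=
          mul_le_mul_of_nonneg_right (hu_anti m (m + 1) (Nat.le_succ m)) (hFnn (m + 1))
        nlinarith [ih]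
    -- pointwise lower bound on f S
    have hA : ∀ S : Finset V, ∀ m : ℕ,
        f ∅ + ∑ k ∈ (Finset.range (min m n)).filter (fun k => e k ∈ S), (F (k + 1) - F k)
          ≤ f (S ∩ P m) := by
      intro S m
      induction m with
      | zero => simp [hP0]
      | succ m ih =>
        by_cases hm : m < n
        · have h2 : min m n = m := min_eq_left (le_of_lt hm)
          have h1 : min (m + 1) n = m + 1 := min_eq_left hm
          rw [h1, Finset.range_add_one, Finset.filter_insert]
          rw [hPsucc m hm]
          by_cases heS : e m ∈ S
          · have hnotin : m ∉ (Finset.range m).filter (fun k => e k ∈ S) := by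
              simp [Finset.mem_filter]
            rw [if_pos heS, Finset.sum_insert hnotin]
            have hint : S ∩ insert (e m) (P m) = insert (e m) (S ∩ P m) := by
              ext a
              simp only [Finset.mem_inter, Finset.mem_insert]
              constructor
              · rintro ⟨ha, hb | hb⟩
                · exact Or.inl hb
                · exact Or.inr ⟨ha, hb⟩
              · rintro (rfl | ⟨ha, hb⟩)
                · exact ⟨heS, Or.inl rfl⟩
                · exact ⟨ha, Or.inr hb⟩
            rw [hint]
            have hsub := hf_submod (S ∩ P m) (P m) Finset.inter_subset_right (e m) (hePk m hm)
            have hFm1 : F (m + 1) = f (insert (e m) (P m)) := by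
              show f (P (m + 1)) = _
              rw [hPsucc m hm]
            have hFm : F m = f (P m) := rfl
            rw [h2] at ih
            linarith
          · rw [if_neg heS]
            have hint : S ∩ insert (e m) (P m) = S ∩ P m := by
              ext a
              simp only [Finset.mem_inter, Finset.mem_insert]
              constructor
              · rintro ⟨ha, rfl | hb⟩
                · exact absurd ha heS
                · exact ⟨ha, hb⟩
              · rintro ⟨ha, hb⟩; exact ⟨ha, Or.inr hb⟩
            rw [hint]
            rw [h2] at ih
            exact ih
        · push_neg at hm
          have h1 : min (m + 1) n = n := min_eq_right (le_trans hm (Nat.le_succ m))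
          have h2 : min m n = n := min_eq_right hm
          rw [h1, hPstab m hm]
          rw [h2] at ih
          exact ih
    have hA' : ∀ S : Finset V,
        f ∅ + ∑ k ∈ (Finset.range n).filter (fun k => e k ∈ S), (F (k + 1) - F k) ≤ f S := by
      intro S
      have := hA S n
      rw [min_self, hPn, Finset.inter_univ] at this
      exact this
    -- expectation bound
    have hstep1 : ∑ S : Finset V,
        μ S * (f ∅ + ∑ k ∈ (Finset.range n).filter (fun k => e k ∈ S), (F (k + 1) - F k))
          ≤ ∑ S : Finset V, μ S * f S :=
      Finset.sum_le_sum (fun S _ => mul_le_mul_of_nonneg_left (hA' S) (hμ_nonneg S))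
    have hswap : ∑ S : Finset V,
        μ S * (∑ k ∈ (Finset.range n).filter (fun k => e k ∈ S), (F (k + 1) - F k))
          = ∑ k ∈ Finset.range n, u k * (F (k + 1) - F k) := by
      have h1 : ∀ S : Finset V,
          μ S * (∑ k ∈ (Finset.range n).filter (fun k => e k ∈ S), (F (k + 1) - F k))
            = ∑ k ∈ Finset.range n, (if e k ∈ S then μ S * (F (k + 1) - F k) else 0) := by
        intro S
        rw [Finset.sum_filter, Finset.mul_sum]
        exact Finset.sum_congr rfl (fun k _ => by by_cases h : e k ∈ S <;> simp [h])
      rw [Finset.sum_congr rfl (fun S _ => h1 S), Finset.sum_comm]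
      refine Finset.sum_congr rfl (fun k hk => ?_)
      have hkn : k < n := Finset.mem_range.mp hk
      have h2 : ∀ S : Finset V, (if e k ∈ S then μ S * (F (k + 1) - F k) else 0)
          = (if e k ∈ S then μ S else 0) * (F (k + 1) - F k) := by
        intro S; by_cases h : e k ∈ S <;> simp [h]
      rw [Finset.sum_congr rfl (fun S _ => h2 S), ← Finset.sum_mul]
      have h3 : ∑ S : Finset V, (if e k ∈ S then μ S else 0) = x (e k) := by
        exact (Finset.sum_filter _ _).symm
      rw [h3, hu]
      simp [hkn]
    have hfinal : f ∅ + ∑ k ∈ Finset.range n, u k * (F (k + 1) - F k)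
        ≤ ∑ S : Finset V, μ S * f S := by
      calc f ∅ + ∑ k ∈ Finset.range n, u k * (F (k + 1) - F k)
          = ∑ S : Finset V, μ S * f ∅ + ∑ S : Finset V,
              μ S * (∑ k ∈ (Finset.range n).filter (fun k => e k ∈ S), (F (k + 1) - F k)) := by
            rw [hswap, ← Finset.sum_mul, hμ_sum, one_mul]
        _ = ∑ S : Finset V,
              μ S * (f ∅ + ∑ k ∈ (Finset.range n).filter (fun k => e k ∈ S), (F (k + 1) - F k)) := by
            rw [← Finset.sum_add_distrib]
            exact Finset.sum_congr rfl (fun S _ => by ring)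
        _ ≤ ∑ S : Finset V, μ S * f S := hstep1
    have h4 := habel n
    rw [hF0] at h4
    have h5 : 0 ≤ u n * F n := mul_nonneg (hu_nonneg n) (hFnn n)
    nlinarith [hf_nonneg (∅ : Finset V)]
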